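/- Let M be a finite rank-4 loopless hypermodular matroid that is non-modular, and let 𝓜 be a modular cut of M containing at least one non-modular pair of flats. Then the following are equivalent: (1) 𝓜 is a proper modular cut; (2) 𝓜 is non-principal and, for every non-modular pair of flats contained in 𝓜, 𝓜 equals the modular cut generated by that pair; (3) 𝓜 contains no flat of rank ≤ 1; (4) the set of rank-2 flats belonging to 𝓜 is a partition of E(M) (the rank-2 flats in 𝓜 are pairwise disjoint and their union is E(M)). -/

import Mathlib

open Set Matroid
open scoped Matroid

namespace SMC

variable {α : Type*}

/-- The rank of a set `X` in a matroid `M`: the maximum cardinality of an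
independent subset of `X` (intended for finite matroids). -/
noncomputable def rk (M : Matroid α) (X : Set α) : ℕ :=
  sSup {n | ∃ I, M.Indep I ∧ I ⊆ X ∧ I.ncard = n}

/-- The rank of a matroid: the rank of its ground set. -/
noncomputable def rkM (M : Matroid α) : ℕ := rk M M.E

/-- The modular defect of a pair of sets:
`r(X) + r(Y) - r(X ∪ Y) - r(X ∩ Y)` (a natural number). -/
noncomputable def pairDefect (M : Matroid α) (X Y : Set α) : ℕ :=
  rk M X + rk M Y - rk M (X ∪ Y) - rk M (X ∩ Y)

/-- A pair of sets is a modular pair if its modular defect is zero. -/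
def ModularPair (M : Matroid α) (X Y : Set α) : Prop := pairDefect M X Y = 0

/-- A matroid is modular if every pair of flats is a modular pair. -/
def Modular (M : Matroid α) : Prop :=
  ∀ F L : Set α, M.IsFlat F → M.IsFlat L → ModularPair M F L

/-- A matroid (of rank at least 3) is hypermodular if every pair of flats of
rank `r(M) - 1` is a modular pair. -/
def Hypermodular (M : Matroid α) : Prop :=
  ∀ F L : Set α, M.IsFlat F → M.IsFlat L →
    rk M F + 1 = rkM M → rk M L + 1 = rkM M → ModularPair M F L

/-- A modular cut of `M`: a collection of flats that is upward closed and
closed under intersections of modular pairs. -/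
def ModularCut (M : Matroid α) (𝓜 : Set (Set α)) : Prop :=
  (∀ F ∈ 𝓜, M.IsFlat F) ∧
  (∀ L ∈ 𝓜, ∀ F : Set α, M.IsFlat F → L ⊆ F → F ∈ 𝓜) ∧
  (∀ F ∈ 𝓜, ∀ L ∈ 𝓜, ModularPair M F L → F ∩ L ∈ 𝓜)

/-- A principal modular cut: the collection of all flats containing some fixed flat. -/
def PrincipalCut (M : Matroid α) (𝓜 : Set (Set α)) : Prop :=
  ∃ F : Set α, M.IsFlat F ∧ 𝓜 = {L | M.IsFlat L ∧ F ⊆ L}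

/-- The modular cut generated by a collection `S` of flats:
the smallest modular cut containing `S`. -/
def genCut (M : Matroid α) (S : Set (Set α)) : Set (Set α) :=
  ⋂₀ {𝓜 | ModularCut M 𝓜 ∧ S ⊆ 𝓜}

/-- A Vámos line arrangement in a rank-4 matroid: four pairwise disjoint rank-2
flats, the union of any three of which has rank 4, with `r(T₀ ∪ T₁) = 3`,
`r(Tᵢ ∪ Lⱼ) = 3` for all `i, j`, and `r(L₀ ∪ L₁) = 4`. -/
def VamosQuad (M : Matroid α) (T₀ T₁ L₀ L₁ : Set α) : Prop :=
  M.IsFlat T₀ ∧ M.IsFlat T₁ ∧ M.IsFlat L₀ ∧ M.IsFlat L₁ ∧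
  rk M T₀ = 2 ∧ rk M T₁ = 2 ∧ rk M L₀ = 2 ∧ rk M L₁ = 2 ∧
  Disjoint T₀ T₁ ∧ Disjoint T₀ L₀ ∧ Disjoint T₀ L₁ ∧
  Disjoint T₁ L₀ ∧ Disjoint T₁ L₁ ∧ Disjoint L₀ L₁ ∧
  rk M (T₀ ∪ T₁ ∪ L₀) = 4 ∧ rk M (T₀ ∪ T₁ ∪ L₁) = 4 ∧
  rk M (T₀ ∪ L₀ ∪ L₁) = 4 ∧ rk M (T₁ ∪ L₀ ∪ L₁) = 4 ∧
  rk M (T₀ ∪ T₁) = 3 ∧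
  rk M (T₀ ∪ L₀) = 3 ∧ rk M (T₀ ∪ L₁) = 3 ∧
  rk M (T₁ ∪ L₀) = 3 ∧ rk M (T₁ ∪ L₁) = 3 ∧
  rk M (L₀ ∪ L₁) = 4

/-- The modular defect of a matroid: the sum of the modular defects of all
unordered pairs of flats (the sum over ordered pairs is twice this). -/
noncomputable def matroidDefect (M : Matroid α) : ℕ :=
  (∑ᶠ F ∈ {F | M.IsFlat F}, ∑ᶠ L ∈ {L | M.IsFlat L}, pairDefect M F L) / 2


section Rank

variable {M : Matroid α} {X Y F G L I J : Set α} {e f : α} {𝓜 : Set (Set α)}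


variable {M : Matroid α} {X Y F G L I J : Set α} {e f : α}

lemma le_rk_of_indep (hfin : M.E.Finite) (hJ : M.Indep J) (hJX : J ⊆ X) :
    J.ncard ≤ rk M X := by
  haveI : M.Finite := ⟨hfin⟩
  obtain ⟨I, hI, hJI⟩ := hJ.subset_isBasis'_of_subset hJX
  have hub : ∀ n ∈ {n | ∃ I, M.Indep I ∧ I ⊆ X ∧ I.ncard = n}, n ≤ I.ncard := by
    rintro n ⟨K, hK, hKX, rfl⟩
    obtain ⟨I', hI', hKI'⟩ := hK.subset_isBasis'_of_subset hKX
    have : I'.ncard = I.ncard :=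
      (isBase_restrict_iff'.2 hI').ncard_eq_ncard_of_isBase (isBase_restrict_iff'.2 hI)
    exact le_trans (ncard_le_ncard hKI' hI'.indep.finite) this.le
  have hmem : J.ncard ∈ {n | ∃ I, M.Indep I ∧ I ⊆ X ∧ I.ncard = n} := ⟨J, hJ, hJX, rfl⟩
  exact le_csSup ⟨I.ncard, hub⟩ hmem

lemma rk_eq_ncard_of_basis' (hfin : M.E.Finite) (hI : M.IsBasis' I X) : rk M X = I.ncard := by
  haveI : M.Finite := ⟨hfin⟩
  refine le_antisymm ?_ (le_rk_of_indep hfin hI.indep hI.subset)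
  refine csSup_le ⟨0, ∅, M.empty_indep, empty_subset _, by simp⟩ ?_
  rintro n ⟨K, hK, hKX, rfl⟩
  obtain ⟨I', hI', hKI'⟩ := hK.subset_isBasis'_of_subset hKX
  have : I'.ncard = I.ncard :=
    (isBase_restrict_iff'.2 hI').ncard_eq_ncard_of_isBase (isBase_restrict_iff'.2 hI)
  exact le_trans (ncard_le_ncard hKI' hI'.indep.finite) this.le

lemma rk_eq_ncard_of_basis (hfin : M.E.Finite) (hI : M.IsBasis I X) : rk M X = I.ncard :=
  rk_eq_ncard_of_basis' hfin hI.isBasis'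

lemma rk_mono (hfin : M.E.Finite) (hXY : X ⊆ Y) : rk M X ≤ rk M Y := by
  obtain ⟨I, hI⟩ := M.exists_isBasis' X
  rw [rk_eq_ncard_of_basis' hfin hI]
  exact le_rk_of_indep hfin hI.indep (hI.subset.trans hXY)

@[simp] lemma rk_empty (hfin : M.E.Finite) : rk M (∅ : Set α) = 0 := by
  rw [rk_eq_ncard_of_basis' hfin (M.empty_indep.isBasis_self.isBasis')]
  simp

lemma rk_closure_eq (hfin : M.E.Finite) (X : Set α) : rk M (M.closure X) = rk M X := by
  obtain ⟨I, hI⟩ := M.exists_isBasis' X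
  rw [rk_eq_ncard_of_basis' hfin hI, rk_eq_ncard_of_basis hfin hI.isBasis_closure_right]

lemma rk_le_rkM (hfin : M.E.Finite) (X : Set α) : rk M X ≤ rkM M := by
  obtain ⟨I, hI⟩ := M.exists_isBasis' X
  rw [rk_eq_ncard_of_basis' hfin hI]
  exact le_rk_of_indep hfin hI.indep hI.indep.subset_ground

lemma rk_insert_le (hfin : M.E.Finite) : rk M (insert e X) ≤ rk M X + 1 := by
  haveI : M.Finite := ⟨hfin⟩
  obtain ⟨J, hJ⟩ := M.exists_isBasis' (insert e X)
  rw [rk_eq_ncard_of_basis' hfin hJ]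
  have h1 : J \ {e} ⊆ X := by
    rw [diff_subset_iff]
    simpa [Set.singleton_union] using hJ.subset
  have h2 : (J \ {e}).ncard ≤ rk M X := le_rk_of_indep hfin (hJ.indep.diff _) h1
  by_cases he : e ∈ J
  · have := ncard_diff_singleton_add_one he hJ.indep.finite
    omega
  · rw [diff_singleton_eq_self he] at h2; omega

lemma rk_insert_of_not_mem_closure (hfin : M.E.Finite) (hX : X ⊆ M.E) (he : e ∈ M.E)
    (hecl : e ∉ M.closure X) : rk M (insert e X) = rk M X + 1 := by
  haveI : M.Finite := ⟨hfin⟩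
  obtain ⟨I, hI⟩ := M.exists_isBasis X hX
  have hIcl : M.closure I = M.closure X := hI.closure_eq_closure
  have heI : e ∉ I := fun h => hecl (M.subset_closure X hX (hI.subset h))
  have hind : M.Indep (insert e I) := by
    rw [hI.indep.insert_indep_iff_of_notMem heI]
    exact ⟨he, by rwa [hIcl]⟩
  have hge : I.ncard + 1 ≤ rk M (insert e X) := by
    have := le_rk_of_indep hfin hind (insert_subset_insert hI.subset)
    rwa [ncard_insert_of_notMem heI hI.indep.finite] at this
  have hle := rk_insert_le (M := M) (e := e) (X := X) hfin
  rw [rk_eq_ncard_of_basis hfin hI] at *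
  omega

lemma rk_submod (hfin : M.E.Finite) (hX : X ⊆ M.E) (hY : Y ⊆ M.E) :
    rk M (X ∪ Y) + rk M (X ∩ Y) ≤ rk M X + rk M Y := by
  haveI : M.Finite := ⟨hfin⟩
  obtain ⟨I, hI⟩ := M.exists_isBasis (X ∩ Y) (inter_subset_left.trans hX)
  obtain ⟨J, hJ, hJI⟩ := hI.exists_isBasis_inter_eq_of_superset
    (inter_subset_left.trans subset_union_left) (union_subset hX hY)
  rw [rk_eq_ncard_of_basis hfin hI, rk_eq_ncard_of_basis hfin hJ]
  have hJX : (J ∩ X).ncard ≤ rk M X := le_rk_of_indep hfin (hJ.indep.inter_right X) inter_subset_right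
  have hJY : (J ∩ Y).ncard ≤ rk M Y := le_rk_of_indep hfin (hJ.indep.inter_right Y) inter_subset_right
  have hU : (J ∩ X) ∪ (J ∩ Y) = J := by
    rw [← inter_union_distrib_left, inter_eq_left]
    exact hJ.subset
  have hICap : (J ∩ X) ∩ (J ∩ Y) = I := by
    rw [← hJI, inter_inter_inter_comm, inter_self]
  have := ncard_union_add_ncard_inter (J ∩ X) (J ∩ Y)
    (hJ.indep.finite.inter_of_left X) (hJ.indep.finite.inter_of_left Y)
  rw [hU, hICap] at this
  omega


lemma modularPair_iff_le :
    ModularPair M X Y ↔ rk M X + rk M Y ≤ rk M (X ∪ Y) + rk M (X ∩ Y) := by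
  rw [ModularPair, pairDefect, Nat.sub_sub, Nat.sub_eq_zero_iff_le]

lemma not_modularPair_iff :
    ¬ ModularPair M X Y ↔ rk M (X ∪ Y) + rk M (X ∩ Y) < rk M X + rk M Y := by
  rw [modularPair_iff_le, not_le]

lemma modularPair_self (X : Set α) : ModularPair M X X := by
  rw [modularPair_iff_le, union_self, inter_self]

lemma modularPair_comm (h : ModularPair M X Y) : ModularPair M Y X := by
  rw [modularPair_iff_le, union_comm, inter_comm, add_comm]
  rwa [modularPair_iff_le] at h

lemma closure_flat' (M : Matroid α) (X : Set α) : M.IsFlat (M.closure X) := by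
  rw [closure_def]
  have hne : Nonempty {F // F ∈ {F | M.IsFlat F ∧ X ∩ M.E ⊆ F}} :=
    ⟨⟨M.E, M.ground_isFlat, inter_subset_right⟩⟩
  rw [sInter_eq_iInter]
  exact IsFlat.iInter fun F => F.2.1

lemma flat_inter (hF : M.IsFlat F) (hG : M.IsFlat G) : M.IsFlat (F ∩ G) := by
  have h : M.closure (F ∩ G) = F ∩ G := by
    refine subset_antisymm ?_ (M.subset_closure _ (inter_subset_left.trans hF.subset_ground))
    refine subset_inter ?_ ?_
    · have h1 := M.closure_subset_closure (inter_subset_left (s := F) (t := G))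
      rwa [hF.closure] at h1
    · have h1 := M.closure_subset_closure (inter_subset_right (s := F) (t := G))
      rwa [hG.closure] at h1
  rw [← h]; exact closure_flat' M _

lemma flat_eq_of_subset_of_rk_le (hfin : M.E.Finite) (hF : M.IsFlat F) (hG : M.IsFlat G)
    (hFG : F ⊆ G) (hr : rk M G ≤ rk M F) : F = G := by
  haveI : M.Finite := ⟨hfin⟩
  obtain ⟨I, hI⟩ := M.exists_isBasis F hF.subset_ground
  obtain ⟨J, hJ, hJF⟩ := hI.exists_isBasis_inter_eq_of_superset hFG hG.subset_ground
  have hIJ : I ⊆ J := by rw [← hJF]; exact inter_subset_left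
  have hcard : J.ncard ≤ I.ncard := by
    rw [← rk_eq_ncard_of_basis hfin hI, ← rk_eq_ncard_of_basis hfin hJ]; exact hr
  have hIJ' : I = J := eq_of_subset_of_ncard_le hIJ hcard hJ.indep.finite
  calc F = M.closure I := by rw [hI.closure_eq_closure, hF.closure]
  _ = M.closure J := by rw [hIJ']
  _ = G := by rw [hJ.closure_eq_closure, hG.closure]

lemma flat_eq_ground (hfin : M.E.Finite) (hF : M.IsFlat F) (hr : rkM M ≤ rk M F) : F = M.E :=
  flat_eq_of_subset_of_rk_le hfin hF M.ground_isFlat hF.subset_ground hr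

lemma flat_eq_empty_of_rk_eq_zero (hfin : M.E.Finite) (hloopless : M.closure ∅ = ∅)
    (hF : M.IsFlat F) (hr : rk M F = 0) : F = ∅ := by
  rw [eq_empty_iff_forall_notMem]
  intro e he
  have h1 : rk M {e} = 1 := by
    have := rk_insert_of_not_mem_closure (M := M) (X := ∅) hfin (empty_subset _)
      (hF.subset_ground he) (by rw [hloopless]; exact notMem_empty e)
    simpa [rk_empty hfin] using this
  have := rk_mono (M := M) hfin (singleton_subset_iff.2 he)
  omega

lemma rk_pos_of_nonempty (hfin : M.E.Finite) (hloopless : M.closure ∅ = ∅)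
    (hX : X ⊆ M.E) (hne : X.Nonempty) : 1 ≤ rk M X := by
  obtain ⟨e, he⟩ := hne
  have h1 : rk M {e} = 1 := by
    have := rk_insert_of_not_mem_closure (M := M) (X := ∅) hfin (empty_subset _)
      (hX he) (by rw [hloopless]; exact notMem_empty e)
    simpa [rk_empty hfin] using this
  have := rk_mono (M := M) hfin (singleton_subset_iff.2 he)
  omega

lemma flat_nonempty (hfin : M.E.Finite) (hF : M.IsFlat F) (hr : rk M F ≠ 0) : F.Nonempty := by
  rcases F.eq_empty_or_nonempty with h | h
  · exact absurd (by rw [h, rk_empty hfin]) hr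
  · exact h

lemma exists_mem_compl_flat (hfin : M.E.Finite) (hF : M.IsFlat F) (hr : rk M F < rkM M) :
    ∃ e ∈ M.E, e ∉ F := by
  by_contra h
  push_neg at h
  have h2 : rk M M.E ≤ rk M F := rk_mono (M := M) hfin h
  have h3 : rk M F < rk M M.E := hr
  omega

/-- Classification of non-modular pairs of flats in a rank-4 hypermodular matroid. -/
lemma nonmodular_struct (hfin : M.E.Finite) (hrk : rkM M = 4) (hloopless : M.closure ∅ = ∅)
    (hhm : Hypermodular M) (hF : M.IsFlat F) (hL : M.IsFlat L) (hnm : ¬ ModularPair M F L) :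
    Disjoint F L ∧ ((rk M F = 2 ∧ rk M L = 2 ∧ rk M (F ∪ L) = 3) ∨
      (rk M F = 2 ∧ rk M L = 3) ∨ (rk M F = 3 ∧ rk M L = 2)) := by
  have hFE := hF.subset_ground
  have hLE := hL.subset_ground
  rw [not_modularPair_iff] at hnm
  -- not subsets of each other
  have hnFL : ¬ F ⊆ L := by
    intro h
    rw [union_eq_right.2 h, inter_eq_left.2 h] at hnm
    omega
  have hnLF : ¬ L ⊆ F := by
    intro h
    rw [union_eq_left.2 h, inter_eq_right.2 h] at hnm
    omega
  obtain ⟨y, hyF, hyL⟩ := not_subset.1 hnFL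
  obtain ⟨z, hzL, hzF⟩ := not_subset.1 hnLF
  -- the union has rank > both
  have hUF : rk M F + 1 ≤ rk M (F ∪ L) := by
    have h1 : rk M (insert z F) = rk M F + 1 :=
      rk_insert_of_not_mem_closure hfin hFE (hLE hzL) (by rwa [hF.closure])
    have h2 : rk M (insert z F) ≤ rk M (F ∪ L) :=
      rk_mono hfin (insert_subset (Or.inr hzL) subset_union_left)
    omega
  have hUL : rk M L + 1 ≤ rk M (F ∪ L) := by
    have h1 : rk M (insert y L) = rk M L + 1 :=
      rk_insert_of_not_mem_closure hfin hLE (hFE hyF) (by rwa [hL.closure])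
    have h2 : rk M (insert y L) ≤ rk M (F ∪ L) :=
      rk_mono hfin (insert_subset (Or.inl hyF) subset_union_right)
    omega
  -- the intersection flat has rank < both
  have hIflat := flat_inter hF hL
  have hIF : rk M (F ∩ L) < rk M F := by
    have hle : rk M (F ∩ L) ≤ rk M F := rk_mono hfin inter_subset_left
    rcases lt_or_eq_of_le hle with h | h
    · exact h
    · exact absurd ((flat_eq_of_subset_of_rk_le hfin hIflat hF inter_subset_left h.ge) ▸
        (inter_subset_right (s := F) (t := L))) hnFL
  have hIL : rk M (F ∩ L) < rk M L := by
    have hle : rk M (F ∩ L) ≤ rk M L := rk_mono hfin inter_subset_right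
    rcases lt_or_eq_of_le hle with h | h
    · exact h
    · have he : F ∩ L = L := flat_eq_of_subset_of_rk_le hfin hIflat hL inter_subset_right h.ge
      exact absurd (he ▸ (inter_subset_left (s := F) (t := L))) hnLF
  -- rank bounds
  have hF4 := rk_le_rkM (M := M) hfin F
  have hL4 := rk_le_rkM (M := M) hfin L
  have hU4 := rk_le_rkM (M := M) hfin (F ∪ L)
  rw [hrk] at hF4 hL4 hU4
  -- rank at least 2
  have hF2 : 2 ≤ rk M F := by
    by_contra h
    push_neg at h
    interval_cases hrF : rk M F
    · exact hnFL ((flat_eq_empty_of_rk_eq_zero hfin hloopless hF hrF) ▸ empty_subset L)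
    · omega
  have hL2 : 2 ≤ rk M L := by
    by_contra h
    push_neg at h
    interval_cases hrL : rk M L
    · exact hnLF ((flat_eq_empty_of_rk_eq_zero hfin hloopless hL hrL) ▸ empty_subset F)
    · omega
  -- rank at most 3
  have hF3 : rk M F ≤ 3 := by
    by_contra h
    have : F = M.E := flat_eq_ground hfin hF (by omega)
    exact hnLF (this ▸ hLE)
  have hL3 : rk M L ≤ 3 := by
    by_contra h
    have : L = M.E := flat_eq_ground hfin hL (by omega)
    exact hnFL (this ▸ hFE)
  -- not both rank 3
  have hnot33 : ¬ (rk M F = 3 ∧ rk M L = 3) := by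
    rintro ⟨h1, h2⟩
    have := hhm F L hF hL (by rw [hrk, h1]) (by rw [hrk, h2])
    rw [modularPair_iff_le] at this
    omega
  -- intersection is empty
  have hsub := rk_submod hfin hFE hLE
  have hI0 : rk M (F ∩ L) = 0 := by omega
  have hIempty : F ∩ L = ∅ := flat_eq_empty_of_rk_eq_zero hfin hloopless hIflat hI0
  refine ⟨disjoint_iff_inter_eq_empty.2 hIempty, ?_⟩
  rcases Nat.lt_or_ge (rk M F) 3 with h2F | h3F
  · rcases Nat.lt_or_ge (rk M L) 3 with h2L | h3L
    · exact Or.inl ⟨by omega, by omega, by omega⟩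
    · exact Or.inr (Or.inl ⟨by omega, by omega⟩)
  · have h2L : rk M L = 2 := by omega
    exact Or.inr (Or.inr ⟨by omega, h2L⟩)



variable {𝓜 : Set (Set α)}

lemma rk_singleton (hfin : M.E.Finite) (hloopless : M.closure ∅ = ∅) (he : e ∈ M.E) :
    rk M {e} = 1 := by
  have := rk_insert_of_not_mem_closure (M := M) (X := ∅) hfin (empty_subset _) he
    (by rw [hloopless]; exact notMem_empty e)
  simpa [rk_empty hfin] using this

lemma inter_mem_of_nonempty (hfin : M.E.Finite) (hrk : rkM M = 4) (hloopless : M.closure ∅ = ∅)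
    (hhm : Hypermodular M) (hcut : ModularCut M 𝓜) (hFm : F ∈ 𝓜) (hLm : L ∈ 𝓜)
    (hne : (F ∩ L).Nonempty) : F ∩ L ∈ 𝓜 := by
  by_cases hmp : ModularPair M F L
  · exact hcut.2.2 F hFm L hLm hmp
  · have hd := (nonmodular_struct hfin hrk hloopless hhm (hcut.1 F hFm) (hcut.1 L hLm) hmp).1
    rw [disjoint_iff_inter_eq_empty] at hd
    rw [hd] at hne
    exact absurd hne not_nonempty_empty

lemma line_disjoint (hfin : M.E.Finite) (hrk : rkM M = 4) (hloopless : M.closure ∅ = ∅)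
    (hhm : Hypermodular M) (hcut : ModularCut M 𝓜) (h3 : ∀ F ∈ 𝓜, ¬ rk M F ≤ 1)
    (hTm : F ∈ 𝓜) (hTm' : L ∈ 𝓜) (h2 : rk M F = 2) (h2' : rk M L = 2) (hne : F ≠ L) :
    Disjoint F L ∧ rk M (F ∪ L) = 3 := by
  have hT := hcut.1 F hTm
  have hT' := hcut.1 L hTm'
  have hdisj : Disjoint F L := by
    by_contra hd
    rw [not_disjoint_iff_nonempty_inter] at hd
    have hWm : F ∩ L ∈ 𝓜 := inter_mem_of_nonempty hfin hrk hloopless hhm hcut hTm hTm' hd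
    have hW2 : 2 ≤ rk M (F ∩ L) := by have := h3 _ hWm; omega
    have hWle : rk M (F ∩ L) ≤ rk M F := rk_mono hfin inter_subset_left
    have hWF : F ∩ L = F :=
      flat_eq_of_subset_of_rk_le hfin (flat_inter hT hT') hT inter_subset_left (by omega)
    have hFL : F ⊆ L := by rw [← hWF]; exact inter_subset_right
    exact hne (flat_eq_of_subset_of_rk_le hfin hT hT' hFL (by omega))
  refine ⟨hdisj, ?_⟩
  obtain ⟨t, ht⟩ := flat_nonempty hfin hT (by omega)
  have htL : t ∉ L := disjoint_left.1 hdisj ht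
  have hge : 3 ≤ rk M (F ∪ L) := by
    have h1 : rk M (insert t L) = rk M L + 1 :=
      rk_insert_of_not_mem_closure hfin hT'.subset_ground (hT.subset_ground ht)
        (by rwa [hT'.closure])
    have h2 : rk M (insert t L) ≤ rk M (F ∪ L) :=
      rk_mono hfin (insert_subset (Or.inl ht) subset_union_right)
    omega
  have hle4 : rk M (F ∪ L) ≤ 4 := hrk ▸ rk_le_rkM hfin _
  by_contra hne3
  have h4 : rk M (F ∪ L) = 4 := by omega
  have hI : F ∩ L = ∅ := disjoint_iff_inter_eq_empty.1 hdisj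
  have hmp : ModularPair M F L := by
    rw [modularPair_iff_le, h4, hI, rk_empty hfin]
    omega
  have := hcut.2.2 F hTm L hTm' hmp
  rw [hI] at this
  exact h3 _ this (by rw [rk_empty hfin]; omega)

lemma plane_inter (hfin : M.E.Finite) (hrk : rkM M = 4) (hhm : Hypermodular M)
    (hcut : ModularCut M 𝓜) (hHm : F ∈ 𝓜) (hHm' : L ∈ 𝓜) (h3 : rk M F = 3)
    (h3' : rk M L = 3) (hne : F ≠ L) : F ∩ L ∈ 𝓜 ∧ rk M (F ∩ L) = 2 := by
  have hH := hcut.1 F hHm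
  have hH' := hcut.1 L hHm'
  have hmp : ModularPair M F L := hhm F L hH hH' (by omega) (by omega)
  refine ⟨hcut.2.2 F hHm L hHm' hmp, ?_⟩
  have hsub := rk_submod hfin hH.subset_ground hH'.subset_ground
  rw [modularPair_iff_le] at hmp
  have hnFL : ¬ F ⊆ L := fun h =>
    hne (flat_eq_of_subset_of_rk_le hfin hH hH' h (by omega))
  obtain ⟨y, hyF, hyL⟩ := not_subset.1 hnFL
  have hge : 4 ≤ rk M (F ∪ L) := by
    have h1 : rk M (insert y L) = rk M L + 1 :=
      rk_insert_of_not_mem_closure hfin hH'.subset_ground (hH.subset_ground hyF)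
        (by rwa [hH'.closure])
    have h2 : rk M (insert y L) ≤ rk M (F ∪ L) :=
      rk_mono hfin (insert_subset (Or.inl hyF) subset_union_right)
    omega
  have hle4 : rk M (F ∪ L) ≤ 4 := hrk ▸ rk_le_rkM hfin _
  omega

lemma line_plane_subset (hfin : M.E.Finite) (hrk : rkM M = 4) (hloopless : M.closure ∅ = ∅)
    (hhm : Hypermodular M) (hcut : ModularCut M 𝓜) (h3 : ∀ F ∈ 𝓜, ¬ rk M F ≤ 1)
    (hLm : L ∈ 𝓜) (hHm : F ∈ 𝓜) (h2 : rk M L = 2) (hH3 : rk M F = 3)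
    (hnd : ¬ Disjoint L F) : L ⊆ F := by
  rw [not_disjoint_iff_nonempty_inter] at hnd
  have hWm : L ∩ F ∈ 𝓜 := inter_mem_of_nonempty hfin hrk hloopless hhm hcut hLm hHm hnd
  have hW2 : 2 ≤ rk M (L ∩ F) := by have := h3 _ hWm; omega
  have hWL : L ∩ F = L := flat_eq_of_subset_of_rk_le hfin
    (flat_inter (hcut.1 _ hLm) (hcut.1 _ hHm)) (hcut.1 _ hLm) inter_subset_left (by omega)
  rw [← hWL]
  exact inter_subset_right

lemma exists_line_of_not_mem_closure (hfin : M.E.Finite) (hrk : rkM M = 4)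
    (hloopless : M.closure ∅ = ∅) (hhm : Hypermodular M) (hcut : ModularCut M 𝓜)
    (h3 : ∀ F ∈ 𝓜, ¬ rk M F ≤ 1) (hYm : Y ∈ 𝓜) (hZm : X ∈ 𝓜) (hY2 : rk M Y = 2)
    (hZ2 : rk M X = 2) (hYZ : Y ≠ X) (he : e ∈ M.E) (hecl : e ∉ M.closure (Y ∪ X)) :
    ∃ L ∈ 𝓜, rk M L = 2 ∧ e ∈ L := by
  have hYf := hcut.1 _ hYm
  have hZf := hcut.1 _ hZm
  have hYE := hYf.subset_ground
  have hZE := hZf.subset_ground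
  have hUE : Y ∪ X ⊆ M.E := union_subset hYE hZE
  have hU3 : rk M (Y ∪ X) = 3 :=
    (line_disjoint hfin hrk hloopless hhm hcut h3 hYm hZm hY2 hZ2 hYZ).2
  have hsubU : Y ∪ X ⊆ M.closure (Y ∪ X) := M.subset_closure _ hUE
  have heY : e ∉ Y := fun h => hecl (hsubU (Or.inl h))
  have heZ : e ∉ X := fun h => hecl (hsubU (Or.inr h))
  set H1 := M.closure (insert e Y) with hH1
  set H2 := M.closure (insert e X) with hH2
  have hH1f : M.IsFlat H1 := closure_flat' M _
  have hH2f : M.IsFlat H2 := closure_flat' M _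
  have hsub1 : insert e Y ⊆ H1 := M.subset_closure _ (insert_subset he hYE)
  have hsub2 : insert e X ⊆ H2 := M.subset_closure _ (insert_subset he hZE)
  have hH1r : rk M H1 = 3 := by
    rw [hH1, rk_closure_eq hfin, rk_insert_of_not_mem_closure hfin hYE he
      (by rwa [hYf.closure]), hY2]
  have hH2r : rk M H2 = 3 := by
    rw [hH2, rk_closure_eq hfin, rk_insert_of_not_mem_closure hfin hZE he
      (by rwa [hZf.closure]), hZ2]
  have hH1m : H1 ∈ 𝓜 := hcut.2.1 Y hYm H1 hH1f fun y hy => hsub1 (Or.inr hy)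
  have hH2m : H2 ∈ 𝓜 := hcut.2.1 X hZm H2 hH2f fun y hy => hsub2 (Or.inr hy)
  have hH12 : H1 ≠ H2 := by
    intro h
    have hsubU' : insert e (Y ∪ X) ⊆ H1 := by
      refine insert_subset (hsub1 (mem_insert e Y)) (union_subset ?_ ?_)
      · exact fun y hy => hsub1 (Or.inr hy)
      · exact fun y hy => h ▸ hsub2 (Or.inr hy)
    have : rk M (insert e (Y ∪ X)) ≤ rk M H1 := rk_mono hfin hsubU'
    rw [rk_insert_of_not_mem_closure hfin hUE he hecl, hU3, hH1r] at this
    omega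
  obtain ⟨hWm, hW2⟩ := plane_inter hfin hrk hhm hcut hH1m hH2m hH1r hH2r hH12
  exact ⟨H1 ∩ H2, hWm, hW2, hsub1 (mem_insert e Y), hsub2 (mem_insert e X)⟩

lemma exists_nonmodular_line_pair (hfin : M.E.Finite) (hrk : rkM M = 4)
    (hloopless : M.closure ∅ = ∅) (hhm : Hypermodular M) (hcut : ModularCut M 𝓜)
    (h3 : ∀ F ∈ 𝓜, ¬ rk M F ≤ 1)
    (hpair : ∃ X Y : Set α, X ∈ 𝓜 ∧ Y ∈ 𝓜 ∧ ¬ ModularPair M X Y) :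
    ∃ Y Z, Y ∈ 𝓜 ∧ Z ∈ 𝓜 ∧ rk M Y = 2 ∧ rk M Z = 2 ∧ ¬ ModularPair M Y Z := by
  -- helper for the plane–line case
  have key : ∀ L0 H0, L0 ∈ 𝓜 → H0 ∈ 𝓜 → rk M L0 = 2 → rk M H0 = 3 → Disjoint L0 H0 →
      ∃ Z ∈ 𝓜, rk M Z = 2 ∧ ¬ ModularPair M L0 Z := by
    intro L0 H0 hL0m hH0m hL02 hH03 hd
    have hL0f := hcut.1 _ hL0m
    have hH0f := hcut.1 _ hH0m
    obtain ⟨g, hg⟩ := flat_nonempty hfin hH0f (by omega)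
    have hgL0 : g ∉ L0 := disjoint_right.1 hd hg
    set H1 := M.closure (insert g L0) with hH1
    have hH1f : M.IsFlat H1 := closure_flat' M _
    have hsub1 : insert g L0 ⊆ H1 :=
      M.subset_closure _ (insert_subset (hH0f.subset_ground hg) hL0f.subset_ground)
    have hH1r : rk M H1 = 3 := by
      rw [hH1, rk_closure_eq hfin, rk_insert_of_not_mem_closure hfin hL0f.subset_ground
        (hH0f.subset_ground hg) (by rwa [hL0f.closure]), hL02]
    have hH1m : H1 ∈ 𝓜 := hcut.2.1 L0 hL0m H1 hH1f fun y hy => hsub1 (Or.inr hy)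
    have hH01 : H0 ≠ H1 := by
      intro h
      obtain ⟨x, hx⟩ := flat_nonempty hfin hL0f (by omega)
      exact disjoint_left.1 hd hx (h ▸ hsub1 (Or.inr hx))
    obtain ⟨hZm, hZ2⟩ := plane_inter hfin hrk hhm hcut hH0m hH1m hH03 hH1r hH01
    refine ⟨H0 ∩ H1, hZm, hZ2, ?_⟩
    rw [not_modularPair_iff]
    have hdisj : Disjoint L0 (H0 ∩ H1) := hd.mono_right inter_subset_left
    rw [disjoint_iff_inter_eq_empty.1 hdisj, rk_empty hfin]
    have hU : L0 ∪ H0 ∩ H1 ⊆ H1 :=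
      union_subset (fun y hy => hsub1 (Or.inr hy)) inter_subset_right
    have := (rk_mono hfin hU).trans_eq hH1r
    omega
  obtain ⟨A, B, hAm, hBm, hnm⟩ := hpair
  obtain ⟨hd, hcase⟩ := nonmodular_struct hfin hrk hloopless hhm (hcut.1 _ hAm) (hcut.1 _ hBm) hnm
  rcases hcase with ⟨h1, h2, _⟩ | ⟨h1, h2⟩ | ⟨h1, h2⟩
  · exact ⟨A, B, hAm, hBm, h1, h2, hnm⟩
  · obtain ⟨Z, hZm, hZ2, hZnm⟩ := key A B hAm hBm h1 h2 hd
    exact ⟨A, Z, hAm, hZm, h1, hZ2, hZnm⟩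
  · obtain ⟨Z, hZm, hZ2, hZnm⟩ := key B A hBm hAm h2 h1 hd.symm
    exact ⟨B, Z, hBm, hZm, h2, hZ2, hZnm⟩

lemma covering (hfin : M.E.Finite) (hrk : rkM M = 4) (hloopless : M.closure ∅ = ∅)
    (hhm : Hypermodular M) (hcut : ModularCut M 𝓜) (h3 : ∀ F ∈ 𝓜, ¬ rk M F ≤ 1)
    (hpair : ∃ X Y : Set α, X ∈ 𝓜 ∧ Y ∈ 𝓜 ∧ ¬ ModularPair M X Y) :
    ∀ e ∈ M.E, ∃ L ∈ 𝓜, rk M L = 2 ∧ e ∈ L := by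
  obtain ⟨Y, Z, hYm, hZm, hY2, hZ2, hnm⟩ :=
    exists_nonmodular_line_pair hfin hrk hloopless hhm hcut h3 hpair
  have hYZ : Y ≠ Z := fun h => hnm (h ▸ modularPair_self Y)
  have hYf := hcut.1 _ hYm
  have hZf := hcut.1 _ hZm
  have hUE : Y ∪ Z ⊆ M.E := union_subset hYf.subset_ground hZf.subset_ground
  have hU3 : rk M (Y ∪ Z) = 3 :=
    (line_disjoint hfin hrk hloopless hhm hcut h3 hYm hZm hY2 hZ2 hYZ).2
  set P := M.closure (Y ∪ Z) with hP
  have hPf : M.IsFlat P := closure_flat' M _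
  have hPr : rk M P = 3 := by rw [hP, rk_closure_eq hfin, hU3]
  have hUP : Y ∪ Z ⊆ P := M.subset_closure _ hUE
  have hPm : P ∈ 𝓜 := hcut.2.1 Y hYm P hPf fun y hy => hUP (Or.inl hy)
  intro e he
  by_cases heY : e ∈ Y
  · exact ⟨Y, hYm, hY2, heY⟩
  by_cases heZ : e ∈ Z
  · exact ⟨Z, hZm, hZ2, heZ⟩
  by_cases heP : e ∈ P
  · -- the hard case : e ∈ P \ (Y ∪ Z)
    obtain ⟨f, hfE, hfP⟩ := exists_mem_compl_flat hfin hPf (by omega)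
    obtain ⟨W, hWm, hW2, hfW⟩ := exists_line_of_not_mem_closure hfin hrk hloopless hhm hcut h3
      hYm hZm hY2 hZ2 hYZ hfE hfP
    have hWf := hcut.1 _ hWm
    have hWY : W ≠ Y := fun h => hfP (hUP (Or.inl (h ▸ hfW)))
    have hWZ : W ≠ Z := fun h => hfP (hUP (Or.inr (h ▸ hfW)))
    have hWP : Disjoint W P := by
      by_contra hnd
      exact hfP (line_plane_subset hfin hrk hloopless hhm hcut h3 hWm hPm hW2 hPr hnd hfW)
    have heW : e ∉ W := fun h => disjoint_left.1 hWP h heP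
    have key : e ∉ M.closure (W ∪ Y) ∨ e ∉ M.closure (W ∪ Z) := by
      by_contra h
      push_neg at h
      obtain ⟨h1, h2⟩ := h
      set Q1 := M.closure (W ∪ Y) with hQ1
      set Q2 := M.closure (W ∪ Z) with hQ2
      have hQ1f : M.IsFlat Q1 := closure_flat' M _
      have hQ2f : M.IsFlat Q2 := closure_flat' M _
      have hQ1sub : W ∪ Y ⊆ Q1 := M.subset_closure _ (union_subset hWf.subset_ground hYf.subset_ground)
      have hQ2sub : W ∪ Z ⊆ Q2 := M.subset_closure _ (union_subset hWf.subset_ground hZf.subset_ground)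
      have hQ1r : rk M Q1 = 3 := by
        rw [hQ1, rk_closure_eq hfin,
          (line_disjoint hfin hrk hloopless hhm hcut h3 hWm hYm hW2 hY2 hWY).2]
      have hQ2r : rk M Q2 = 3 := by
        rw [hQ2, rk_closure_eq hfin,
          (line_disjoint hfin hrk hloopless hhm hcut h3 hWm hZm hW2 hZ2 hWZ).2]
      have hQ1m : Q1 ∈ 𝓜 := hcut.2.1 W hWm Q1 hQ1f fun y hy => hQ1sub (Or.inl hy)
      have hQ2m : Q2 ∈ 𝓜 := hcut.2.1 W hWm Q2 hQ2f fun y hy => hQ2sub (Or.inl hy)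
      have hQ12 : Q1 ≠ Q2 := by
        intro hq
        have hsubU' : insert f (Y ∪ Z) ⊆ Q1 := by
          refine insert_subset (hQ1sub (Or.inl hfW)) (union_subset ?_ ?_)
          · exact fun y hy => hQ1sub (Or.inr hy)
          · exact fun y hy => hq ▸ hQ2sub (Or.inr hy)
        have hh : rk M (insert f (Y ∪ Z)) ≤ rk M Q1 := rk_mono hfin hsubU'
        rw [rk_insert_of_not_mem_closure hfin hUE hfE hfP, hU3, hQ1r] at hh
        omega
      obtain ⟨hW'm, hW'2⟩ := plane_inter hfin hrk hhm hcut hQ1m hQ2m hQ1r hQ2r hQ12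
      have hWW' : W = Q1 ∩ Q2 := flat_eq_of_subset_of_rk_le hfin hWf
        (flat_inter hQ1f hQ2f)
        (subset_inter (fun y hy => hQ1sub (Or.inl hy)) (fun y hy => hQ2sub (Or.inl hy)))
        (by omega)
      exact heW (hWW' ▸ ⟨h1, h2⟩)
    rcases key with h | h
    · exact exists_line_of_not_mem_closure hfin hrk hloopless hhm hcut h3 hWm hYm hW2 hY2
        hWY he h
    · exact exists_line_of_not_mem_closure hfin hrk hloopless hhm hcut h3 hWm hZm hW2 hZ2
        hWZ he h
  · exact exists_line_of_not_mem_closure hfin hrk hloopless hhm hcut h3 hYm hZm hY2 hZ2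
      hYZ he (by rwa [← hP])

-- genCut lemmas
lemma allFlats_modularCut (M : Matroid α) : ModularCut M {F | M.IsFlat F} :=
  ⟨fun _ h => h, fun _ _ F hF _ => hF, fun _ hF _ hL _ => flat_inter hF hL⟩

lemma genCut_modularCut {S : Set (Set α)} (hS : ∀ F ∈ S, M.IsFlat F) :
    ModularCut M (genCut M S) := by
  refine ⟨fun F hF => ?_, fun L hL F hF hLF => ?_, fun F hF L hL hmp => ?_⟩
  · exact hF {F | M.IsFlat F} ⟨allFlats_modularCut M, hS⟩
  · intro t ht
    exact ht.1.2.1 L (hL t ht) F hF hLF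
  · intro t ht
    exact ht.1.2.2 F (hF t ht) L (hL t ht) hmp

lemma subset_genCut (M : Matroid α) (S : Set (Set α)) : S ⊆ genCut M S :=
  fun X hX => fun _ ht => ht.2 hX

lemma genCut_subset {S : Set (Set α)} (hcut : ModularCut M 𝓜) (hS : S ⊆ 𝓜) :
    genCut M S ⊆ 𝓜 :=
  sInter_subset_of_mem ⟨hcut, hS⟩


end Rank

theorem statement_7 {α : Type*} (M : Matroid α) (hfin : M.E.Finite)
    (hrk : rkM M = 4) (hloopless : M.closure ∅ = ∅) (hhm : Hypermodular M)
    (hnonmod : ¬ Modular M)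
    (𝓜 : Set (Set α)) (hcut : ModularCut M 𝓜)
    (hpair : ∃ X Y : Set α, X ∈ 𝓜 ∧ Y ∈ 𝓜 ∧ ¬ ModularPair M X Y) :
    List.TFAE
      [ M.closure ∅ ∉ 𝓜,
        ¬ PrincipalCut M 𝓜 ∧ ∀ X Y : Set α, X ∈ 𝓜 → Y ∈ 𝓜 →
          ¬ ModularPair M X Y → 𝓜 = genCut M {X, Y},
        ∀ F ∈ 𝓜, ¬ rk M F ≤ 1,
        (∀ T ∈ 𝓜, ∀ T' ∈ 𝓜, rk M T = 2 → rk M T' = 2 → T ≠ T' →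
          Disjoint T T') ∧ ⋃₀ {T | T ∈ 𝓜 ∧ rk M T = 2} = M.E ] := by
  obtain ⟨X0, Y0, hX0, hY0, hnm0⟩ := hpair
  tfae_have 3 → 1 := by
    intro h3 hmem
    refine h3 _ hmem ?_
    rw [hloopless, rk_empty hfin]
    omega
  tfae_have 1 → 3 := by
    intro h1 F hFm hrF
    have hF := hcut.1 F hFm
    have hempty : (∅ : Set α) ∉ 𝓜 := by rwa [← hloopless]
    have hd := (nonmodular_struct hfin hrk hloopless hhm (hcut.1 _ hX0) (hcut.1 _ hY0) hnm0)
    interval_cases hr : rk M F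
    · exact hempty ((flat_eq_empty_of_rk_eq_zero hfin hloopless hF hr) ▸ hFm)
    · have hsub : ∀ A, A ∈ 𝓜 → ¬ ModularPair M A F → False := by
        intro A hAm hmp
        have := (nonmodular_struct hfin hrk hloopless hhm (hcut.1 _ hAm) hF hmp).2
        omega
      have hstep : ∀ A, A ∈ 𝓜 → F ⊆ A := by
        intro A hAm
        have hmp : ModularPair M A F := by
          by_contra h
          exact hsub A hAm h
        have hWm : A ∩ F ∈ 𝓜 := hcut.2.2 A hAm F hFm hmp
        have hWne : (A ∩ F).Nonempty := by
          rcases (A ∩ F).eq_empty_or_nonempty with h | h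
          · exact absurd (h ▸ hWm) hempty
          · exact h
        have hWflat := flat_inter (hcut.1 _ hAm) hF
        have hW1 : 1 ≤ rk M (A ∩ F) :=
          rk_pos_of_nonempty hfin hloopless (inter_subset_right.trans hF.subset_ground) hWne
        have : A ∩ F = F := flat_eq_of_subset_of_rk_le hfin hWflat hF inter_subset_right
          (by omega)
        rw [← this]
        exact inter_subset_left
      have hFsub : F ⊆ X0 ∩ Y0 := subset_inter (hstep X0 hX0) (hstep Y0 hY0)
      rw [disjoint_iff_inter_eq_empty.1 hd.1, subset_empty_iff] at hFsub
      rw [hFsub, rk_empty hfin] at hr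
      omega
  tfae_have 3 → 4 := by
    intro h3
    constructor
    · intro T hT T2 hT2 h2 h22 hne
      exact (line_disjoint hfin hrk hloopless hhm hcut h3 hT hT2 h2 h22 hne).1
    · refine subset_antisymm (sUnion_subset fun T hT => (hcut.1 T hT.1).subset_ground) ?_
      intro e he
      obtain ⟨L, hLm, hL2, heL⟩ := covering hfin hrk hloopless hhm hcut h3
        ⟨X0, Y0, hX0, hY0, hnm0⟩ e he
      exact ⟨L, ⟨hLm, hL2⟩, heL⟩
  tfae_have 4 → 3 := by
    rintro ⟨hdisj, -⟩ F hFm hrF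
    -- produce a rank-1 flat in 𝓜
    obtain ⟨F', hF'm, hF'f, hF'1⟩ : ∃ F', F' ∈ 𝓜 ∧ M.IsFlat F' ∧ rk M F' = 1 := by
      have hF := hcut.1 F hFm
      interval_cases hr : rk M F
      · obtain ⟨a, ha⟩ : M.E.Nonempty := by
          refine flat_nonempty hfin M.ground_isFlat ?_
          have : rk M M.E = 4 := hrk
          omega
        have hFe : F = ∅ := flat_eq_empty_of_rk_eq_zero hfin hloopless hF hr
        refine ⟨M.closure {a}, hcut.2.1 F hFm _ (closure_flat' M _) ?_, closure_flat' M _, ?_⟩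
        · rw [hFe]; exact empty_subset _
        · rw [rk_closure_eq hfin, rk_singleton hfin hloopless ha]
      · exact ⟨F, hFm, hF, hr⟩
    obtain ⟨x, hx⟩ := flat_nonempty hfin hF'f (by omega)
    obtain ⟨b, hbE, hbF'⟩ := exists_mem_compl_flat hfin hF'f (by omega)
    set L1 := M.closure (insert b F') with hL1
    have hL1f : M.IsFlat L1 := closure_flat' M _
    have hsub1 : insert b F' ⊆ L1 := M.subset_closure _ (insert_subset hbE hF'f.subset_ground)
    have hL1r : rk M L1 = 2 := by
      rw [hL1, rk_closure_eq hfin, rk_insert_of_not_mem_closure hfin hF'f.subset_ground hbE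
        (by rwa [hF'f.closure]), hF'1]
    have hL1m : L1 ∈ 𝓜 := hcut.2.1 F' hF'm L1 hL1f fun y hy => hsub1 (Or.inr hy)
    obtain ⟨c, hcE, hcL1⟩ := exists_mem_compl_flat hfin hL1f (by omega)
    set L2 := M.closure (insert c F') with hL2
    have hL2f : M.IsFlat L2 := closure_flat' M _
    have hsub2 : insert c F' ⊆ L2 := M.subset_closure _ (insert_subset hcE hF'f.subset_ground)
    have hcF' : c ∉ F' := fun h => hcL1 (hsub1 (Or.inr h))
    have hL2r : rk M L2 = 2 := by
      rw [hL2, rk_closure_eq hfin, rk_insert_of_not_mem_closure hfin hF'f.subset_ground hcE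
        (by rwa [hF'f.closure]), hF'1]
    have hL2m : L2 ∈ 𝓜 := hcut.2.1 F' hF'm L2 hL2f fun y hy => hsub2 (Or.inr hy)
    have hne : L1 ≠ L2 := fun h => hcL1 (h ▸ hsub2 (mem_insert c F'))
    have := hdisj L1 hL1m L2 hL2m hL1r hL2r hne
    exact disjoint_left.1 this (hsub1 (Or.inr hx)) (hsub2 (Or.inr hx))
  tfae_have 2 → 1 := by
    rintro ⟨hnp, -⟩ hmem
    refine hnp ⟨M.closure ∅, closure_flat' M ∅, ?_⟩
    ext L
    simp only [mem_setOf_eq]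
    constructor
    · intro hL
      exact ⟨hcut.1 _ hL, by rw [hloopless]; exact empty_subset L⟩
    · rintro ⟨hfl, hsub⟩
      exact hcut.2.1 _ hmem L hfl hsub
  tfae_have 3 → 2 := by
    intro h3
    have hemp : (∅ : Set α) ∉ 𝓜 := fun h => h3 _ h (by rw [rk_empty hfin]; omega)
    constructor
    · rintro ⟨F0, hF0flat, hEq⟩
      have hF0m : F0 ∈ 𝓜 := by rw [hEq]; exact ⟨hF0flat, subset_rfl⟩
      rw [hEq] at hX0 hY0
      have hd := (nonmodular_struct hfin hrk hloopless hhm hX0.1 hY0.1 hnm0).1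
      have hF0sub : F0 ⊆ X0 ∩ Y0 := subset_inter hX0.2 hY0.2
      rw [disjoint_iff_inter_eq_empty.1 hd, subset_empty_iff] at hF0sub
      exact hemp (hF0sub ▸ hF0m)
    · intro X Y hXm hYm hnmXY
      have hSflat : ∀ F ∈ ({X, Y} : Set (Set α)), M.IsFlat F := by
        rintro F hF
        rcases hF with rfl | rfl
        · exact hcut.1 _ hXm
        · exact hcut.1 _ hYm
      have hGcut := genCut_modularCut hSflat
      have hGsub : genCut M {X, Y} ⊆ 𝓜 :=
        genCut_subset hcut (insert_subset_iff.2 ⟨hXm, singleton_subset_iff.2 hYm⟩)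
      have hXG : X ∈ genCut M {X, Y} := subset_genCut M _ (mem_insert _ _)
      have hYG : Y ∈ genCut M {X, Y} := subset_genCut M _ (mem_insert_of_mem _ rfl)
      have h3G : ∀ F ∈ genCut M {X, Y}, ¬ rk M F ≤ 1 := fun F hF => h3 F (hGsub hF)
      refine subset_antisymm ?_ hGsub
      intro F hFm
      have hF := hcut.1 F hFm
      have h2 : 2 ≤ rk M F := by have := h3 F hFm; omega
      have h4 : rk M F ≤ 4 := by
        have := rk_le_rkM (M := M) hfin F
        omega
      interval_cases hr : rk M F
      · -- rank 2
        obtain ⟨e, heF⟩ := flat_nonempty hfin hF (by omega)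
        obtain ⟨L, hLG, hL2, heL⟩ := covering hfin hrk hloopless hhm hGcut h3G
          ⟨X, Y, hXG, hYG, hnmXY⟩ e (hF.subset_ground heF)
        have hLm : L ∈ 𝓜 := hGsub hLG
        by_cases hFL : F = L
        · exact hFL ▸ hLG
        · exact absurd heL (disjoint_left.1
            (line_disjoint hfin hrk hloopless hhm hcut h3 hFm hLm hr hL2 hFL).1 heF)
      · -- rank 3
        obtain ⟨e, heF⟩ := flat_nonempty hfin hF (by omega)
        obtain ⟨L, hLG, hL2, heL⟩ := covering hfin hrk hloopless hhm hGcut h3G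
          ⟨X, Y, hXG, hYG, hnmXY⟩ e (hF.subset_ground heF)
        have hLm : L ∈ 𝓜 := hGsub hLG
        have hLF : L ⊆ F := line_plane_subset hfin hrk hloopless hhm hcut h3 hLm hFm hL2 hr
          (not_disjoint_iff.2 ⟨e, heL, heF⟩)
        exact hGcut.2.1 L hLG F hF hLF
      · -- rank 4
        have hFE : F = M.E := flat_eq_ground hfin hF (by rw [hrk]; omega)
        exact hGcut.2.1 X hXG F hF (hFE ▸ (hcut.1 _ hXm).subset_ground)
  tfae_finish

end SMC
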